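/- Let $\sigma > 0$ and define $F_\sigma(x, y) = \frac{1}{2} + \frac{\mathrm{sgn}(y-x)}{2} \cdot \frac{\log(1 + |y-x|/\sigma)}{\log(1 + 1/\sigma)}$ for $x \in [0,1]$, $y \in [x-1, 1+x]$. Then for all $x, \tilde{x}, y, x' $ with $\mathrm{sgn}(y - x) = \mathrm{sgn}(x' - \tilde{x})$, one has $|F_\sigma(x,y) - F_\sigma(\tilde{x}, x')| \leq \frac{|y - x'| + |x - \tilde{x}|}{2\sigma \log(1 + 1/\sigma)}$. -/

import Mathlib

/-- CDF of the ASA proposal distribution with scale `σ`, centered at `x`. -/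
noncomputable def asaCDF (σ x y : ℝ) : ℝ :=
  1 / 2 + Real.sign (y - x) / 2 * (Real.log (1 + |y - x| / σ) / Real.log (1 + 1 / σ))

lemma log_lip (a b : ℝ) (ha : 0 ≤ a) (hb : 0 ≤ b) :
    |Real.log (1 + a) - Real.log (1 + b)| ≤ |a - b| := by
  wlog h : b ≤ a generalizing a b
  · rw [abs_sub_comm, abs_sub_comm a b]; exact this b a hb ha (le_of_not_ge h)
  have h1b : (0:ℝ) < 1 + b := by linarith
  have h1a : (0:ℝ) < 1 + a := by linarith
  rw [abs_of_nonneg (sub_nonneg.2 (Real.log_le_log h1b (by linarith))),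
    abs_of_nonneg (by linarith : (0:ℝ) ≤ a - b)]
  have := Real.log_le_sub_one_of_pos (show (0:ℝ) < (1+a)/(1+b) from div_pos h1a h1b)
  rw [Real.log_div h1a.ne' h1b.ne'] at this
  have : Real.log (1+a) - Real.log (1+b) ≤ (a - b) / (1 + b) := by
    calc Real.log (1+a) - Real.log (1+b) ≤ (1+a)/(1+b) - 1 := this
    _ = (a - b) / (1 + b) := by field_simp; ring
  refine this.trans ?_
  rw [div_le_iff₀ h1b]
  nlinarith

theorem stmt_5 (σ : ℝ) (hσ : 0 < σ) (x x' y xt : ℝ)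
    (hx : x ∈ Set.Icc (0 : ℝ) 1) (hxt : xt ∈ Set.Icc (0 : ℝ) 1)
    (hy : y ∈ Set.Icc (x - 1) (1 + x)) (hx' : x' ∈ Set.Icc (xt - 1) (1 + xt))
    (hsgn : Real.sign (y - x) = Real.sign (x' - xt)) :
    |asaCDF σ x y - asaCDF σ xt x'| ≤
      (|y - x'| + |x - xt|) / (2 * σ * Real.log (1 + 1 / σ)) := by
  have hL : 0 < Real.log (1 + 1 / σ) :=
    Real.log_pos (by have h := one_div_pos.mpr hσ; linarith)
  have hRHS0 : 0 ≤ (|y - x'| + |x - xt|) / (2 * σ * Real.log (1 + 1 / σ)) := by positivity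
  -- key bound on logs
  have hkey : |Real.log (1 + |y - x| / σ) - Real.log (1 + |x' - xt| / σ)|
      ≤ (|y - x'| + |x - xt|) / σ := by
    have h1 := log_lip (|y - x| / σ) (|x' - xt| / σ) (by positivity) (by positivity)
    refine h1.trans ?_
    rw [div_sub_div_same, abs_div, abs_of_pos hσ, div_le_div_iff_of_pos_right hσ]
    calc |(|y - x| - |x' - xt|)| ≤ |(y - x) - (x' - xt)| := abs_abs_sub_abs_le_abs_sub _ _
      _ = |(y - x') + (xt - x)| := by ring_nf
      _ ≤ |y - x'| + |xt - x| := abs_add_le _ _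
      _ = |y - x'| + |x - xt| := by rw [abs_sub_comm xt x]
  set A := Real.log (1 + |y - x| / σ)
  set B := Real.log (1 + |x' - xt| / σ)
  set L := Real.log (1 + 1 / σ)
  have hfin : |A - B| / (2 * L) ≤ (|y - x'| + |x - xt|) / (2 * σ * L) := by
    rw [div_le_div_iff₀ (by positivity) (by positivity)]
    calc |A - B| * (2 * σ * L) = (|A - B| * σ) * (2 * L) := by ring
    _ ≤ ((|y - x'| + |x - xt|) / σ * σ) * (2 * L) := by
        have : |A - B| * σ ≤ (|y - x'| + |x - xt|) / σ * σ :=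
          mul_le_mul_of_nonneg_right hkey hσ.le
        exact mul_le_mul_of_nonneg_right this (by positivity)
    _ = (|y - x'| + |x - xt|) * (2 * L) := by field_simp
  rcases lt_trichotomy (y - x) 0 with hneg | hzero | hpos
  · have hs1 : Real.sign (y - x) = -1 := Real.sign_of_neg hneg
    have hneg' : x' - xt < 0 := by
      rcases lt_trichotomy (x' - xt) 0 with h | h | h
      · exact h
      · rw [hs1, h, Real.sign_zero] at hsgn; norm_num at hsgn
      · rw [hs1, Real.sign_of_pos h] at hsgn; norm_num at hsgn
    have hs2 : Real.sign (x' - xt) = -1 := Real.sign_of_neg hneg'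
    unfold asaCDF
    rw [hs1, hs2]
    have : 1 / 2 + -1 / 2 * (A / L) - (1 / 2 + -1 / 2 * (B / L)) = -((A - B) / (2 * L)) := by
      field_simp; ring
    rw [this, abs_neg, abs_div, abs_of_pos (by positivity : (0:ℝ) < 2 * L)]
    exact hfin
  · have hzero' : x' - xt = 0 := by
      rw [hzero, Real.sign_zero] at hsgn
      exact Real.sign_eq_zero_iff.mp hsgn.symm
    unfold asaCDF
    rw [hzero, hzero', Real.sign_zero]
    simpa using hRHS0
  · have hs1 : Real.sign (y - x) = 1 := Real.sign_of_pos hpos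
    have hpos' : 0 < x' - xt := by
      rcases lt_trichotomy (x' - xt) 0 with h | h | h
      · rw [hs1, Real.sign_of_neg h] at hsgn; norm_num at hsgn
      · rw [hs1, h, Real.sign_zero] at hsgn; norm_num at hsgn
      · exact h
    have hs2 : Real.sign (x' - xt) = 1 := Real.sign_of_pos hpos'
    unfold asaCDF
    rw [hs1, hs2]
    have : 1 / 2 + 1 / 2 * (A / L) - (1 / 2 + 1 / 2 * (B / L)) = (A - B) / (2 * L) := by
      field_simp; ring
    rw [this, abs_div, abs_of_pos (by positivity : (0:ℝ) < 2 * L)]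
    exact hfin
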